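/- Let F be a field of characteristic different from 2 containing elements i and s with i² = −1 and s² = a for some nonzero a ∈ F. Let b, c, x₀, x₁, x₂, x₄ ∈ F satisfy: bc ≠ 0, x₀ + x₁ ≠ 0, ax₀² + x₂² ≠ 0, ix₁ + x₂ ≠ 0, and the relation ax₀² + bx₁² + x₂² + cx₄² = 0. Set f = (2aix₀ + 2sx₂)(2ix₁ + 2x₂)/(x₀+x₁)² and g = (−2aix₀ + 2sx₂)(2ix₁ + 2x₂)/(x₀+x₁)² (both are nonzero). Then in the Brauer group Br F, [(bc, f)_F] + [(bc, g)_F] = [(c, b)_F]. -/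

import Mathlib

open scoped Quaternion TensorProduct
open Matrix

namespace QuatSumAux
variable {F : Type} [Field F]

def Nmat (Qc Mc : F) : Matrix (Fin 2) (Fin 2) F := !![-Mc, -Qc; Qc, Mc]
def Em : Matrix (Fin 2) (Fin 2) F := !![0,1;1,0]
def uQ (c b ι : F) : ℍ[F,c,b] := ⟨0,0,0,ι⟩
def tvQ (c b t x₁ x₄ : F) : ℍ[F,c,b] := ⟨0, t*x₄, t*x₁, 0⟩

lemma Nmat_mul_Nmat (Qc Mc : F) : Nmat Qc Mc * Nmat Qc Mc = (Mc^2 - Qc^2) • 1 := by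
  ext k l
  fin_cases k <;> fin_cases l <;>
    simp [Nmat, Matrix.mul_apply, Fin.sum_univ_two] <;> ring

lemma Nmat_mul_Em (Qc Mc : F) : Nmat Qc Mc * Em = -(Em * Nmat Qc Mc) := by
  ext k l
  fin_cases k <;> fin_cases l <;>
    simp [Nmat, Em, Matrix.mul_apply, Fin.sum_univ_two]

lemma Em_mul_Em : (Em : Matrix (Fin 2) (Fin 2) F) * Em = 1 := by
  ext k l
  fin_cases k <;> fin_cases l <;>
    simp [Em, Matrix.mul_apply, Fin.sum_univ_two]

lemma mat_decomp (Qc Mc : F) (h2 : (2:F) ≠ 0) (hD : Mc^2 - Qc^2 ≠ 0)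
    (m : Matrix (Fin 2) (Fin 2) F) :
    ∃ x y z w : F,
    m = x • 1 + y • (Em * Nmat Qc Mc) + z • Em + w • Nmat Qc Mc := by
  refine ⟨(m 0 0 + m 1 1)/2,
    (Mc * (m 0 1 - m 1 0) - Qc * (m 0 0 - m 1 1))/(2*(Mc^2-Qc^2)),
    (m 0 1 + m 1 0)/2,
    (Qc * (m 0 1 - m 1 0) - Mc * (m 0 0 - m 1 1))/(2*(Mc^2-Qc^2)), ?_⟩
  ext k l
  fin_cases k <;> fin_cases l <;>
    simp [Nmat, Em, Matrix.mul_apply, Fin.sum_univ_two] <;>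
    field_simp <;> ring

lemma uQ_mul_uQ (c b ι : F) (hι : ι^2 = -1) :
    uQ c b ι * uQ c b ι = (b*c) • (1 : ℍ[F,c,b]) := by
  ext <;> simp [uQ] <;> ring_nf <;> linear_combination (-(b*c)) * hι

lemma tvQ_mul_tvQ (c b t x₁ x₄ : F) :
    tvQ c b t x₁ x₄ * tvQ c b t x₁ x₄ = (t^2*(b*x₁^2+c*x₄^2)) • (1 : ℍ[F,c,b]) := by
  ext <;> simp [tvQ] <;> ring

lemma tvQ_mul_uQ (c b ι t x₁ x₄ : F) :
    tvQ c b t x₁ x₄ * uQ c b ι = -(uQ c b ι * tvQ c b t x₁ x₄) := by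
  ext <;> simp [tvQ, uQ] <;> ring

lemma quat_decomp (c b ι t x₁ x₄ : F) (hι : ι^2 = -1) (ht : t ≠ 0)
    (hd : b*x₁^2+c*x₄^2 ≠ 0) (q : ℍ[F,c,b]) :
    ∃ x y z w : F,
    q = x • 1 + y • uQ c b ι + z • tvQ c b t x₁ x₄
      + w • (uQ c b ι * tvQ c b t x₁ x₄) := by
  refine ⟨q.re, -(ι*q.imK), (c*x₄*q.imI + b*x₁*q.imJ)/(t*(b*x₁^2+c*x₄^2)),
    ι*(x₄*q.imJ - x₁*q.imI)/(t*(b*x₁^2+c*x₄^2)), ?_⟩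
  ext
  · simp [uQ, tvQ]
  · simp [uQ, tvQ]; field_simp; ring_nf
    linear_combination (b*x₁^2*q.imI - b*x₁*x₄*q.imJ) * hι
  · simp [uQ, tvQ]; field_simp; ring_nf
    linear_combination (c*x₄^2*q.imJ - c*x₁*x₄*q.imI) * hι
  · simp [uQ, tvQ]; ring_nf
    linear_combination q.imK * hι


lemma liftHom_i {A : Type} [Ring A] [Algebra F A] {c₁ c₂ : F}
    (p : QuaternionAlgebra.Basis A c₁ 0 c₂) :
    p.liftHom (⟨0,1,0,0⟩ : ℍ[F,c₁,c₂]) = p.i := by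
  show p.lift _ = _
  unfold QuaternionAlgebra.Basis.lift
  simp

lemma liftHom_j {A : Type} [Ring A] [Algebra F A] {c₁ c₂ : F}
    (p : QuaternionAlgebra.Basis A c₁ 0 c₂) :
    p.liftHom (⟨0,0,1,0⟩ : ℍ[F,c₁,c₂]) = p.j := by
  show p.lift _ = _
  unfold QuaternionAlgebra.Basis.lift
  simp

lemma basis_comm {A : Type} [Ring A] [Algebra F A] {c₁ c₂ d₁ d₂ : F}
    (p : QuaternionAlgebra.Basis A c₁ 0 c₂) (q : QuaternionAlgebra.Basis A d₁ 0 d₂)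
    (hii : Commute p.i q.i) (hij : Commute p.i q.j)
    (hji : Commute p.j q.i) (hjj : Commute p.j q.j) :
    ∀ x y, Commute (p.liftHom x) (q.liftHom y) := by
  have hik : Commute p.i q.k := by rw [← q.i_mul_j]; exact hii.mul_right hij
  have hjk : Commute p.j q.k := by rw [← q.i_mul_j]; exact hji.mul_right hjj
  have hki : Commute p.k q.i := by rw [← p.i_mul_j]; exact hii.mul_left hji
  have hkj : Commute p.k q.j := by rw [← p.i_mul_j]; exact hij.mul_left hjj
  have hkk : Commute p.k q.k := by rw [← q.i_mul_j]; exact hki.mul_right hkj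
  intro x y
  show Commute (p.lift x) (q.lift y)
  unfold QuaternionAlgebra.Basis.lift
  refine Commute.add_right (Commute.add_right (Commute.add_right ?_ ?_) ?_) ?_ <;>
    refine Commute.add_left (Commute.add_left (Commute.add_left ?_ ?_) ?_) ?_ <;>
    first
      | exact Algebra.commute_algebraMap_left _ _
      | exact Algebra.commute_algebraMap_right _ _
      | exact (hii.smul_right _).smul_left _
      | exact (hij.smul_right _).smul_left _
      | exact (hik.smul_right _).smul_left _
      | exact (hji.smul_right _).smul_left _
      | exact (hjj.smul_right _).smul_left _
      | exact (hjk.smul_right _).smul_left _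
      | exact (hki.smul_right _).smul_left _
      | exact (hkj.smul_right _).smul_left _
      | exact (hkk.smul_right _).smul_left _

/-- The core algebraic lemma. -/
theorem core (h2 : (2:F) ≠ 0) (ι b c f g t x₁ x₄ : F)
    (hι : ι^2 = -1) (hbc : b*c ≠ 0) (hg : g ≠ 0) (ht : t ≠ 0)
    (hd : b*x₁^2 + c*x₄^2 ≠ 0) (hfg : f*g = t^2*(b*x₁^2+c*x₄^2)) :
    Nonempty ((ℍ[F,b*c,f] ⊗[F] ℍ[F,b*c,g]) ≃ₐ[F]
      Matrix (Fin 2) (Fin 2) ℍ[F,c,b]) := by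
  have hb : b ≠ 0 := fun h => hbc (by rw [h, zero_mul])
  have hc : c ≠ 0 := fun h => hbc (by rw [h, mul_zero])
  set Q := ℍ[F,c,b]
  set X := Q ⊗[F] Matrix (Fin 2) (Fin 2) F
  -- notation
  set q₀ : F := (1 - (b*c)^2*g)/2 with hq₀
  set m₀ : F := (-1 - (b*c)^2*g)/2 with hm₀
  have hDeq : m₀^2 - q₀^2 = (b*c)^2*g := by rw [hq₀, hm₀]; field_simp; ring
  have hDne : m₀^2 - q₀^2 ≠ 0 := by
    rw [hDeq]; exact mul_ne_zero (pow_ne_zero _ hbc) hg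
  set N : Matrix (Fin 2) (Fin 2) F := Nmat q₀ m₀ with hN
  have hNN : N * N = ((b*c)^2*g) • 1 := by rw [hN, Nmat_mul_Nmat, hDeq]
  have hNE : N * Em = -(Em * N) := Nmat_mul_Em _ _
  set u : Q := uQ c b ι with hu
  set tv : Q := tvQ c b t x₁ x₄ with htv
  have huu : u * u = (b*c) • (1:Q) := uQ_mul_uQ c b ι hι
  have htvtv : tv * tv = (f*g) • (1:Q) := by rw [htv, tvQ_mul_tvQ, hfg]
  have htvu : tv * u = -(u * tv) := tvQ_mul_uQ c b ι t x₁ x₄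
  -- the four generators
  set I1 : X := u ⊗ₜ[F] 1 with hI1d
  set J1 : X := tv ⊗ₜ[F] ((b*c*g)⁻¹ • N) with hJ1d
  set I2 : X := u ⊗ₜ[F] Em with hI2d
  set J2 : X := (1:Q) ⊗ₜ[F] ((b*c)⁻¹ • N) with hJ2d
  -- basis 1
  have hI1I1 : I1 * I1 = (b*c) • (1:X) := by
    rw [hI1d, Algebra.TensorProduct.tmul_mul_tmul, huu, mul_one,
      ← TensorProduct.smul_tmul', Algebra.TensorProduct.one_def]
  have hJ1J1 : J1 * J1 = f • (1:X) := by
    rw [hJ1d, Algebra.TensorProduct.tmul_mul_tmul, htvtv,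
      smul_mul_smul_comm, hNN, smul_smul, ← TensorProduct.smul_tmul',
      TensorProduct.tmul_smul, smul_smul, Algebra.TensorProduct.one_def]
    congr 1
    field_simp
  have hJ1I1 : J1 * I1 = -(I1 * J1) := by
    rw [hJ1d, hI1d, Algebra.TensorProduct.tmul_mul_tmul,
      Algebra.TensorProduct.tmul_mul_tmul, htvu, one_mul, mul_one,
      TensorProduct.neg_tmul]
  -- basis 2
  have hI2I2 : I2 * I2 = (b*c) • (1:X) := by
    rw [hI2d, Algebra.TensorProduct.tmul_mul_tmul, huu, Em_mul_Em,
      ← TensorProduct.smul_tmul', Algebra.TensorProduct.one_def]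
  have hJ2J2 : J2 * J2 = g • (1:X) := by
    rw [hJ2d, Algebra.TensorProduct.tmul_mul_tmul, one_mul,
      smul_mul_smul_comm, hNN, smul_smul, TensorProduct.tmul_smul,
      Algebra.TensorProduct.one_def]
    congr 1
    field_simp
  have hJ2I2 : J2 * I2 = -(I2 * J2) := by
    rw [hJ2d, hI2d, Algebra.TensorProduct.tmul_mul_tmul,
      Algebra.TensorProduct.tmul_mul_tmul, one_mul, mul_one,
      smul_mul_assoc, hNE]
    simp [TensorProduct.neg_tmul, TensorProduct.tmul_neg, TensorProduct.tmul_smul]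
  -- commutation of the generators
  have hC_II : Commute I1 I2 := by
    rw [Commute, SemiconjBy, hI1d, hI2d, Algebra.TensorProduct.tmul_mul_tmul,
      Algebra.TensorProduct.tmul_mul_tmul, one_mul, mul_one]
  have hC_IJ : Commute I1 J2 := by
    rw [Commute, SemiconjBy, hI1d, hJ2d, Algebra.TensorProduct.tmul_mul_tmul,
      Algebra.TensorProduct.tmul_mul_tmul]
    simp
  have hC_JI : Commute J1 I2 := by
    rw [Commute, SemiconjBy, hJ1d, hI2d, Algebra.TensorProduct.tmul_mul_tmul,
      Algebra.TensorProduct.tmul_mul_tmul, htvu, smul_mul_assoc, hNE]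
    simp [TensorProduct.neg_tmul, TensorProduct.tmul_neg, TensorProduct.tmul_smul,
      mul_smul_comm]
  have hC_JJ : Commute J1 J2 := by
    rw [Commute, SemiconjBy, hJ1d, hJ2d, Algebra.TensorProduct.tmul_mul_tmul,
      Algebra.TensorProduct.tmul_mul_tmul, one_mul, mul_one,
      smul_mul_smul_comm, smul_mul_smul_comm, mul_comm ((b*c*g)⁻¹)]
  -- the two quaternion bases
  set basis1 : QuaternionAlgebra.Basis X (b*c) 0 f :=
    { i := I1, j := J1, k := I1 * J1,
      i_mul_i := by rw [hI1I1, zero_smul, add_zero], j_mul_j := hJ1J1, i_mul_j := rfl,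
        j_mul_i := by rw [hJ1I1, zero_smul, zero_sub] }
    with hbasis1
  set basis2 : QuaternionAlgebra.Basis X (b*c) 0 g :=
    { i := I2, j := J2, k := I2 * J2,
      i_mul_i := by rw [hI2I2, zero_smul, add_zero], j_mul_j := hJ2J2, i_mul_j := rfl,
        j_mul_i := by rw [hJ2I2, zero_smul, zero_sub] }
    with hbasis2
  set φ := basis1.liftHom with hφ
  set ψ := basis2.liftHom with hψ
  have hcomm : ∀ x y, Commute (φ x) (ψ y) :=
    basis_comm basis1 basis2 hC_II hC_IJ hC_JI hC_JJ
  set Φ := Algebra.TensorProduct.lift φ ψ hcomm with hΦ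
  set S := Φ.range with hS
  -- membership of the generators in the range
  have hI1m : I1 ∈ S := (AlgHom.mem_range _).mpr
    ⟨(⟨0,1,0,0⟩ : ℍ[F,b*c,f]) ⊗ₜ[F] 1, by
      simp only [hΦ, Algebra.TensorProduct.lift_tmul, _root_.map_one, mul_one, hφ, liftHom_i]; rfl⟩
  have hJ1m : J1 ∈ S := (AlgHom.mem_range _).mpr
    ⟨(⟨0,0,1,0⟩ : ℍ[F,b*c,f]) ⊗ₜ[F] 1, by
      simp only [hΦ, Algebra.TensorProduct.lift_tmul, _root_.map_one, mul_one, hφ, liftHom_j]; rfl⟩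
  have hI2m : I2 ∈ S := (AlgHom.mem_range _).mpr
    ⟨(1 : ℍ[F,b*c,f]) ⊗ₜ[F] ⟨0,1,0,0⟩, by
      simp only [hΦ, Algebra.TensorProduct.lift_tmul, _root_.map_one, one_mul, hψ, liftHom_i]; rfl⟩
  have hJ2m : J2 ∈ S := (AlgHom.mem_range _).mpr
    ⟨(1 : ℍ[F,b*c,f]) ⊗ₜ[F] ⟨0,0,1,0⟩, by
      simp only [hΦ, Algebra.TensorProduct.lift_tmul, _root_.map_one, one_mul, hψ, liftHom_j]; rfl⟩
  -- auxiliary elements in the range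
  have h11m : ((1:Q) ⊗ₜ[F] (1 : Matrix (Fin 2) (Fin 2) F)) ∈ S := by
    rw [← Algebra.TensorProduct.one_def]; exact one_mem S
  have htv1 : (tv ⊗ₜ[F] (1 : Matrix (Fin 2) (Fin 2) F)) = J1 * J2 := by
    rw [hJ1d, hJ2d, Algebra.TensorProduct.tmul_mul_tmul, mul_one,
      smul_mul_smul_comm, hNN, smul_smul]
    congr 1
    rw [show (b*c*g)⁻¹ * (b*c)⁻¹ * ((b*c)^2*g) = 1 by field_simp, one_smul]
  have htv1m : (tv ⊗ₜ[F] (1 : Matrix (Fin 2) (Fin 2) F)) ∈ S := htv1 ▸ mul_mem hJ1m hJ2m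
  have hutv1m : ((u * tv) ⊗ₜ[F] (1 : Matrix (Fin 2) (Fin 2) F)) ∈ S := by
    have : (u * tv) ⊗ₜ[F] (1 : Matrix (Fin 2) (Fin 2) F)
        = I1 * (tv ⊗ₜ[F] (1 : Matrix (Fin 2) (Fin 2) F)) := by
      rw [hI1d, Algebra.TensorProduct.tmul_mul_tmul, mul_one]
    rw [this]; exact mul_mem hI1m htv1m
  have hEmm : ((1:Q) ⊗ₜ[F] Em) ∈ S := by
    have : (1:Q) ⊗ₜ[F] Em = (b*c)⁻¹ • (I1 * I2) := by
      rw [hI1d, hI2d, Algebra.TensorProduct.tmul_mul_tmul, huu, one_mul,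
        ← TensorProduct.smul_tmul', smul_smul, inv_mul_cancel₀ hbc, one_smul]
    rw [this]; exact SMulMemClass.smul_mem _ (mul_mem hI1m hI2m)
  have hNm : ((1:Q) ⊗ₜ[F] N) ∈ S := by
    have : (1:Q) ⊗ₜ[F] N = (b*c) • J2 := by
      rw [hJ2d, TensorProduct.tmul_smul, smul_smul, mul_inv_cancel₀ hbc, one_smul]
    rw [this]; exact SMulMemClass.smul_mem _ hJ2m
  have hENm : ((1:Q) ⊗ₜ[F] (Em * N)) ∈ S := by
    have : (1:Q) ⊗ₜ[F] (Em * N) = ((1:Q) ⊗ₜ[F] Em) * ((1:Q) ⊗ₜ[F] N) := by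
      rw [Algebra.TensorProduct.tmul_mul_tmul, mul_one]
    rw [this]; exact mul_mem hEmm hNm
  -- all pure tensors with second factor 1
  have hpure1 : ∀ q : Q, (q ⊗ₜ[F] (1 : Matrix (Fin 2) (Fin 2) F)) ∈ S := by
    intro q
    obtain ⟨x, y, z, w, hqd⟩ := quat_decomp c b ι t x₁ x₄ hι ht hd q
    rw [← hu, ← htv] at hqd
    rw [hqd]
    simp only [TensorProduct.add_tmul, TensorProduct.smul_tmul']
    exact add_mem (add_mem (add_mem (SMulMemClass.smul_mem _ h11m)
      (SMulMemClass.smul_mem _ hI1m)) (SMulMemClass.smul_mem _ htv1m))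
      (SMulMemClass.smul_mem _ hutv1m)
  -- all pure tensors with first factor 1
  have hpure2 : ∀ m : Matrix (Fin 2) (Fin 2) F, ((1:Q) ⊗ₜ[F] m) ∈ S := by
    intro m
    obtain ⟨x, y, z, w, hmd⟩ := mat_decomp q₀ m₀ h2 hDne m
    rw [← hN] at hmd
    rw [hmd]
    simp only [TensorProduct.tmul_add, TensorProduct.tmul_smul]
    exact add_mem (add_mem (add_mem (SMulMemClass.smul_mem _ h11m)
      (SMulMemClass.smul_mem _ hENm)) (SMulMemClass.smul_mem _ hEmm))
      (SMulMemClass.smul_mem _ hNm)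
  -- surjectivity
  have hsurj : Function.Surjective Φ := by
    intro z
    have hz : z ∈ S := by
      induction z using TensorProduct.induction_on with
      | zero => exact zero_mem S
      | tmul q m =>
        rw [show q ⊗ₜ[F] m = (q ⊗ₜ[F] (1 : Matrix (Fin 2) (Fin 2) F)) * ((1:Q) ⊗ₜ[F] m) by
          rw [Algebra.TensorProduct.tmul_mul_tmul, mul_one, one_mul]]
        exact mul_mem (hpure1 q) (hpure2 m)
      | add a b ha hb => exact add_mem ha hb
    exact hz
  -- dimensions
  have hdim : Module.finrank F (ℍ[F,b*c,f] ⊗[F] ℍ[F,b*c,g]) = Module.finrank F X := by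
    rw [Module.finrank_tensorProduct, Module.finrank_tensorProduct,
      QuaternionAlgebra.finrank_eq_four, QuaternionAlgebra.finrank_eq_four,
      QuaternionAlgebra.finrank_eq_four, Module.finrank_matrix]
    simp
  have hinj : Function.Injective Φ := by
    have := (LinearMap.injective_iff_surjective_of_finrank_eq_finrank
      (f := Φ.toLinearMap) hdim).mpr hsurj
    exact this
  exact ⟨(AlgEquiv.ofBijective Φ ⟨hinj, hsurj⟩).trans
    (matrixEquivTensor (Fin 2) F Q).symm⟩


end QuatSumAux


/-- Let `F` be a field of characteristic ≠ 2 containing `i` and `s` with `i² = −1`,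
`s² = a ≠ 0`. Let `b, c, x₀, x₁, x₂, x₄ ∈ F` satisfy `bc ≠ 0`, `x₀ + x₁ ≠ 0`,
`ax₀² + x₂² ≠ 0`, `ix₁ + x₂ ≠ 0` and `ax₀² + bx₁² + x₂² + cx₄² = 0`. Set
`f = (2aix₀ + 2sx₂)(2ix₁ + 2x₂)/(x₀+x₁)²` and `g = (−2aix₀ + 2sx₂)(2ix₁ + 2x₂)/(x₀+x₁)²`.
Then `f` and `g` are nonzero and `[(bc, f)] + [(bc, g)] = [(c, b)]` in `Br F`;
equivalently (comparing dimensions of central simple algebras)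
`(bc,f) ⊗ (bc,g) ≅ M₂((c,b))` as `F`-algebras. -/
theorem quaternion_sum_class (F : Type) [Field F] (h2 : (2 : F) ≠ 0)
    (i s a : F) (hi : i ^ 2 = -1) (hs : s ^ 2 = a) (ha : a ≠ 0)
    (b c x₀ x₁ x₂ x₄ : F) (hbc : b * c ≠ 0) (hx01 : x₀ + x₁ ≠ 0)
    (hax : a * x₀ ^ 2 + x₂ ^ 2 ≠ 0) (hix : i * x₁ + x₂ ≠ 0)
    (hrel : a * x₀ ^ 2 + b * x₁ ^ 2 + x₂ ^ 2 + c * x₄ ^ 2 = 0) :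
    (2 * a * i * x₀ + 2 * s * x₂) * (2 * i * x₁ + 2 * x₂) / (x₀ + x₁) ^ 2 ≠ 0 ∧
    (-(2 * a * i * x₀) + 2 * s * x₂) * (2 * i * x₁ + 2 * x₂) / (x₀ + x₁) ^ 2 ≠ 0 ∧
    Nonempty
      ((ℍ[F, b * c, (2 * a * i * x₀ + 2 * s * x₂) * (2 * i * x₁ + 2 * x₂) / (x₀ + x₁) ^ 2] ⊗[F]
          ℍ[F, b * c, (-(2 * a * i * x₀) + 2 * s * x₂) * (2 * i * x₁ + 2 * x₂) / (x₀ + x₁) ^ 2])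
        ≃ₐ[F] Matrix (Fin 2) (Fin 2) ℍ[F, c, b]) := by
  set f := (2 * a * i * x₀ + 2 * s * x₂) * (2 * i * x₁ + 2 * x₂) / (x₀ + x₁) ^ 2 with hfdef
  set g := (-(2 * a * i * x₀) + 2 * s * x₂) * (2 * i * x₁ + 2 * x₂) / (x₀ + x₁) ^ 2 with hgdef
  have h4 : (4:F) ≠ 0 := by
    have : (4:F) = 2*2 := by norm_num
    rw [this]; exact mul_ne_zero h2 h2
  have hprod : (2*a*i*x₀+2*s*x₂) * (-(2*a*i*x₀)+2*s*x₂) = 4*(a*(a*x₀^2+x₂^2)) := by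
    linear_combination (4*x₂^2)*hs + (-(4*a^2*x₀^2))*hi
  have hprodne : (2*a*i*x₀+2*s*x₂) * (-(2*a*i*x₀)+2*s*x₂) ≠ 0 := by
    rw [hprod]; exact mul_ne_zero h4 (mul_ne_zero ha hax)
  have hne1 : (2*a*i*x₀+2*s*x₂) ≠ 0 := (mul_ne_zero_iff.mp hprodne).1
  have hne2 : (-(2*a*i*x₀)+2*s*x₂) ≠ 0 := (mul_ne_zero_iff.mp hprodne).2
  have hfac2 : (2*i*x₁+2*x₂) ≠ 0 := by
    have e : 2*i*x₁+2*x₂ = 2*(i*x₁+x₂) := by ring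
    rw [e]; exact mul_ne_zero h2 hix
  have hden : ((x₀+x₁)^2 : F) ≠ 0 := pow_ne_zero _ hx01
  have hf0 : f ≠ 0 := div_ne_zero (mul_ne_zero hne1 hfac2) hden
  have hg0 : g ≠ 0 := div_ne_zero (mul_ne_zero hne2 hfac2) hden
  have hs0 : s ≠ 0 := by intro h; apply ha; rw [← hs, h]; ring
  have hι0 : i ≠ 0 := by
    intro h; rw [h] at hi
    exact one_ne_zero (α := F) (by linear_combination hi)
  have hd0 : b*x₁^2 + c*x₄^2 ≠ 0 := by
    intro h; apply hax; linear_combination hrel - h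
  set t := 2*s*i*(2*i*x₁+2*x₂)/(x₀+x₁)^2 with htdef
  have ht0 : t ≠ 0 :=
    div_ne_zero (mul_ne_zero (mul_ne_zero (mul_ne_zero h2 hs0) hι0) hfac2) hden
  have hd' : b*x₁^2+c*x₄^2 = -(a*x₀^2+x₂^2) := by linear_combination hrel
  have hfg : f*g = t^2*(b*x₁^2+c*x₄^2) := by
    rw [hd']
    have e1 : f*g = ((2*a*i*x₀+2*s*x₂) * (-(2*a*i*x₀)+2*s*x₂)) * (2*i*x₁+2*x₂)^2
        / ((x₀+x₁)^2)^2 := by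
      rw [hfdef, hgdef]; field_simp
    have e2 : t^2 = 4*(s^2)*(i^2)*(2*i*x₁+2*x₂)^2/((x₀+x₁)^2)^2 := by
      rw [htdef]; field_simp; ring
    rw [e1, hprod, e2, hs, hi]; ring
  obtain ⟨e⟩ := QuatSumAux.core h2 i b c f g t x₁ x₄ hi hbc hg0 ht0 hd0 hfg
  exact ⟨hf0, hg0, ⟨e⟩⟩
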